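/- For every ground type γ there exists a constant k_γ such that for every type-γ value term graph v, the total number of vertices of v is at most k_γ · (1 + size(v)), where size(v) counts only the data-constructor vertices. -/
import Mathlib


/-- Values (tree model of value term graphs). -/
inductive Val : Type
  | unit : Val
  | pair : Val → Val → Val
  | inj : Bool → Val → Val
  | constr : Val → Val

mutual
/-- Ground types: unit, sums, products, and inductive data types μP. -/
inductive GTy : Type
  | unit : GTy
  | sum : GTy → GTy → GTy
  | prod : GTy → GTy → GTy
  | mu : PolyF → GTy

/-- Polynomial functors over ground types. -/
inductive PolyF : Type
  | id : PolyF
  | const : GTy → PolyF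
  | sum : PolyF → PolyF → PolyF
  | prod : PolyF → PolyF → PolyF
end

mutual
/-- `HasTy v γ`: the value `v` is a type-`γ` value term graph. -/
inductive HasTy : Val → GTy → Prop
  | unit : HasTy Val.unit GTy.unit
  | pair {v₁ v₂ γ₁ γ₂} : HasTy v₁ γ₁ → HasTy v₂ γ₂ →
      HasTy (Val.pair v₁ v₂) (GTy.prod γ₁ γ₂)
  | injl {v γ₁ γ₂} : HasTy v γ₁ → HasTy (Val.inj false v) (GTy.sum γ₁ γ₂)
  | injr {v γ₁ γ₂} : HasTy v γ₂ → HasTy (Val.inj true v) (GTy.sum γ₁ γ₂)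
  | constr {v p} : HasTyP v p (GTy.mu p) → HasTy (Val.constr v) (GTy.mu p)

/-- `HasTyP v P δ`: the value `v` is a type-`P(δ)` value term graph. -/
inductive HasTyP : Val → PolyF → GTy → Prop
  | id {v δ} : HasTy v δ → HasTyP v PolyF.id δ
  | const {v t δ} : HasTy v t → HasTyP v (PolyF.const t) δ
  | pair {v₁ v₂ p q δ} : HasTyP v₁ p δ → HasTyP v₂ q δ →
      HasTyP (Val.pair v₁ v₂) (PolyF.prod p q) δ
  | injl {v p q δ} : HasTyP v p δ → HasTyP (Val.inj false v) (PolyF.sum p q) δ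
  | injr {v p q δ} : HasTyP v q δ → HasTyP (Val.inj true v) (PolyF.sum p q) δ
end

/-- Total number of vertices. -/
def totalVertices : Val → ℕ
  | Val.unit => 1
  | Val.pair v₁ v₂ => 1 + totalVertices v₁ + totalVertices v₂
  | Val.inj _ v => 1 + totalVertices v
  | Val.constr v => 1 + totalVertices v

/-- Number of data-constructor vertices. -/
def size : Val → ℕ
  | Val.unit => 0
  | Val.pair v₁ v₂ => size v₁ + size v₂
  | Val.inj _ v => size v
  | Val.constr v => 1 + size v

mutual
/-- Additive constant for ground types. -/
def ga : GTy → ℕ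
  | GTy.unit => 1
  | GTy.sum a b => 1 + ga a + ga b
  | GTy.prod a b => 1 + ga a + ga b
  | GTy.mu _ => 0

/-- Multiplicative constant for ground types. -/
def gb : GTy → ℕ
  | GTy.unit => 0
  | GTy.sum a b => gb a + gb b
  | GTy.prod a b => gb a + gb b
  | GTy.mu p => 1 + pc p + pm p

/-- Additive constant for polynomial functors. -/
def pc : PolyF → ℕ
  | PolyF.id => 0
  | PolyF.const t => ga t
  | PolyF.sum p q => 1 + pc p + pc q
  | PolyF.prod p q => 1 + pc p + pc q

/-- Multiplicative constant for polynomial functors. -/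
def pm : PolyF → ℕ
  | PolyF.id => 0
  | PolyF.const t => gb t
  | PolyF.sum p q => pm p + pm q
  | PolyF.prod p q => pm p + pm q
end

lemma main_bound : ∀ v : Val,
    (∀ γ, HasTy v γ → totalVertices v ≤ ga γ + gb γ * size v) ∧
    (∀ p δ, HasTyP v p δ → ga δ = 0 →
      totalVertices v ≤ pc p + max (gb δ) (pm p) * size v) := by
  intro v
  induction v with
  | unit =>
    have h1 : ∀ γ, HasTy Val.unit γ → totalVertices Val.unit ≤ ga γ + gb γ * size Val.unit := by
      intro γ h
      cases h
      simp [totalVertices, size, ga]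
    refine ⟨h1, ?_⟩
    intro p δ h hδ
    cases h with
    | id h' =>
      have := h1 _ h'
      simp [hδ, size, totalVertices] at *
    | const h' =>
      have hb : HasTy Val.unit _ := h'
      cases hb
      simp [totalVertices, size, pc, ga]
  | pair v₁ v₂ ih₁ ih₂ =>
    have h1 : ∀ γ, HasTy (Val.pair v₁ v₂) γ →
        totalVertices (Val.pair v₁ v₂) ≤ ga γ + gb γ * size (Val.pair v₁ v₂) := by
      intro γ h
      cases h with
      | pair ha hb =>
        have e1 := ih₁.1 _ ha
        have e2 := ih₂.1 _ hb
        simp only [totalVertices, size, ga, gb]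
        nlinarith [Nat.zero_le (size v₁), Nat.zero_le (size v₂)]
    refine ⟨h1, ?_⟩
    intro p δ h hδ
    cases h with
    | id h' =>
      have := h1 _ h'
      simp only [pc, pm, Nat.max_zero]
      omega
    | @const _ t _ h' =>
      have := h1 _ h'
      simp only [pc, pm]
      have hle : gb t ≤ max (gb δ) (gb t) := le_max_right _ _
      nlinarith [Nat.zero_le (size (Val.pair v₁ v₂))]
    | @pair _ _ pp qq _ ha hb =>
      have e1 := ih₁.2 _ _ ha hδ
      have e2 := ih₂.2 _ _ hb hδ
      simp only [totalVertices, size, pc, pm]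
      have m1 : max (gb δ) (pm pp) ≤ max (gb δ) (pm pp + pm qq) :=
        max_le_max le_rfl (Nat.le_add_right _ _)
      have m2 : max (gb δ) (pm qq) ≤ max (gb δ) (pm pp + pm qq) :=
        max_le_max le_rfl (Nat.le_add_left _ _)
      nlinarith [Nat.zero_le (size v₁), Nat.zero_le (size v₂)]
  | inj b v ih =>
    have h1 : ∀ γ, HasTy (Val.inj b v) γ →
        totalVertices (Val.inj b v) ≤ ga γ + gb γ * size (Val.inj b v) := by
      intro γ h
      cases h with
      | injl ha =>
        have e := ih.1 _ ha
        simp only [totalVertices, size, ga, gb]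
        nlinarith [Nat.zero_le (size v)]
      | injr ha =>
        have e := ih.1 _ ha
        simp only [totalVertices, size, ga, gb]
        nlinarith [Nat.zero_le (size v)]
    refine ⟨h1, ?_⟩
    intro p δ h hδ
    cases h with
    | id h' =>
      have := h1 _ h'
      simp only [pc, pm, Nat.max_zero]
      omega
    | @const _ t _ h' =>
      have := h1 _ h'
      simp only [pc, pm]
      have hle : gb t ≤ max (gb δ) (gb t) := le_max_right _ _
      nlinarith [Nat.zero_le (size (Val.inj b v))]
    | @injl _ pp qq _ ha =>
      have e := ih.2 _ _ ha hδ
      simp only [totalVertices, size, pc, pm]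
      have m1 : max (gb δ) (pm pp) ≤ max (gb δ) (pm pp + pm qq) :=
        max_le_max le_rfl (Nat.le_add_right _ _)
      nlinarith [Nat.zero_le (size v)]
    | @injr _ pp qq _ ha =>
      have e := ih.2 _ _ ha hδ
      simp only [totalVertices, size, pc, pm]
      have m2 : max (gb δ) (pm qq) ≤ max (gb δ) (pm pp + pm qq) :=
        max_le_max le_rfl (Nat.le_add_left _ _)
      nlinarith [Nat.zero_le (size v)]
  | constr v ih =>
    have h1 : ∀ γ, HasTy (Val.constr v) γ →
        totalVertices (Val.constr v) ≤ ga γ + gb γ * size (Val.constr v) := by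
      intro γ h
      cases h with
      | @constr _ p hp =>
        have e := ih.2 p (GTy.mu p) hp rfl
        have hmax : max (gb (GTy.mu p)) (pm p) = gb (GTy.mu p) := by
          apply max_eq_left
          simp only [gb]
          omega
        rw [hmax] at e
        simp only [totalVertices, size, ga, gb] at *
        nlinarith [Nat.zero_le (size v)]
    refine ⟨h1, ?_⟩
    intro p δ h hδ
    cases h with
    | id h' =>
      have := h1 _ h'
      simp only [pc, pm, Nat.max_zero]
      omega
    | @const _ t _ h' =>
      have := h1 _ h'
      simp only [pc, pm]
      have hle : gb t ≤ max (gb δ) (gb t) := le_max_right _ _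
      nlinarith [Nat.zero_le (size (Val.constr v))]

theorem stmt_11 (γ : GTy) :
    ∃ k : ℕ, ∀ v : Val, HasTy v γ → totalVertices v ≤ k * (1 + size v) := by
  refine ⟨ga γ + gb γ, fun v hv => ?_⟩
  have := (main_bound v).1 γ hv
  nlinarith [Nat.zero_le (size v)]
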